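/- Let r ≥ s ≥ 3 with r ≤ ⌊(5s−1)/3⌋ − 1. If Δ : [1, 6s − 5] → {1,2,3} is any 3-coloring, then either (i) there exists a monochromatic r-element subset S ⊆ [1, 6s − 5] with diam(S) ≥ 3s − 3, or (ii) there exist monochromatic sets S₁, S₂ ⊆ [1, 6s − 5] with |S₁| = s, |S₂| = r, max(S₁) < min(S₂), and diam(S₁) ≤ diam(S₂). -/

import Mathlib

open Finset

/-- diameter of a finite set of naturals -/
def diam (S : Finset ℕ) : ℕ := (S.max.getD 0) - (S.min.getD 0)

/-- S is monochromatic under a coloring -/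
def Mono {α : Type*} (f : ℕ → α) (S : Finset ℕ) : Prop := ∀ a ∈ S, ∀ b ∈ S, f a = f b

/-- S is zero-sum mod m under an integer coloring -/
def ZeroSum (f : ℕ → ℤ) (m : ℕ) (S : Finset ℕ) : Prop := (m : ℤ) ∣ ∑ x ∈ S, f x

/-- every element of S colored ∞ (= none) -/
def InftyMono (f : ℕ → Option ℤ) (S : Finset ℕ) : Prop := ∀ x ∈ S, f x = none

/-- S consists of ℤ-colored elements and is zero-sum mod m -/
def ZeroSumOpt (f : ℕ → Option ℤ) (m : ℕ) (S : Finset ℕ) : Prop :=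
  (∀ x ∈ S, (f x).isSome) ∧ (m : ℤ) ∣ ∑ x ∈ S, (f x).getD 0

lemma diam_eq {S : Finset ℕ} (h : S.Nonempty) : diam S = S.max' h - S.min' h := by
  unfold diam
  rw [← Finset.coe_max' h, ← Finset.coe_min' h]
  rfl


lemma exists_bottom : ∀ (k : ℕ) (T : Finset ℕ), k ≤ T.card →
    ∃ S, S ⊆ T ∧ S.card = k ∧ ∀ x ∈ T, x ∉ S → ∀ y ∈ S, y < x := by
  intro k
  induction k with
  | zero => intro T _; exact ⟨∅, by simp, by simp, by simp⟩
  | succ k ih =>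
    intro T hT
    have hne : T.Nonempty := by rw [← Finset.card_pos]; omega
    obtain ⟨S', h1, h2, h3⟩ := ih (T.erase (T.min' hne))
      (by rw [Finset.card_erase_of_mem (T.min'_mem hne)]; omega)
    refine ⟨insert (T.min' hne) S', ?_, ?_, ?_⟩
    · intro x hx
      rcases Finset.mem_insert.mp hx with h | h
      · exact h ▸ T.min'_mem hne
      · exact Finset.erase_subset _ _ (h1 h)
    · rw [Finset.card_insert_of_notMem (fun hmem => (Finset.mem_erase.mp (h1 hmem)).1 rfl), h2]
    · intro x hxT hxS y hy
      have hxm : x ≠ T.min' hne := fun h => hxS (h ▸ Finset.mem_insert_self _ S')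
      rcases Finset.mem_insert.mp hy with h | h
      · exact h ▸ lt_of_le_of_ne (T.min'_le x hxT) (Ne.symm hxm)
      · exact h3 x (Finset.mem_erase.mpr ⟨hxm, hxT⟩) (fun hc => hxS (Finset.mem_insert_of_mem hc)) y h

lemma exists_spanning {T : Finset ℕ} {r : ℕ} (h2 : 2 ≤ r) (hr : r ≤ T.card) :
    ∃ S, S ⊆ T ∧ S.card = r ∧ S.min = T.min ∧ S.max = T.max := by
  have hT : T.Nonempty := by rw [← Finset.card_pos]; omega
  have hlt : T.min' hT < T.max' hT := T.min'_lt_max'_of_card (by omega)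
  have hsub : ({T.min' hT, T.max' hT} : Finset ℕ) ⊆ T := by
    intro x hx
    rcases Finset.mem_insert.mp hx with h | h
    · exact h ▸ T.min'_mem hT
    · exact (Finset.mem_singleton.mp h) ▸ T.max'_mem hT
  have hcard2 : ({T.min' hT, T.max' hT} : Finset ℕ).card = 2 := Finset.card_pair hlt.ne
  obtain ⟨u, hbu, hut, hcard⟩ := Finset.exists_subsuperset_card_eq (n := r - 2 + ({T.min' hT, T.max' hT} : Finset ℕ).card) hsub (by omega) (by rw [hcard2]; omega)
  have hucard : u.card = r := by rw [hcard, hcard2]; omega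
  have hu : u.Nonempty := by rw [← Finset.card_pos]; omega
  have hminmem : T.min' hT ∈ u := hbu (Finset.mem_insert_self _ _)
  have hmaxmem : T.max' hT ∈ u := hbu (by simp)
  have hmin' : u.min' hu = T.min' hT :=
    le_antisymm (u.min'_le _ hminmem) (Finset.min'_subset hu hut)
  have hmax' : u.max' hu = T.max' hT :=
    le_antisymm (Finset.max'_subset hu hut) (u.le_max' _ hmaxmem)
  exact ⟨u, hut, hucard,
    by rw [← Finset.coe_min' hu, ← Finset.coe_min' hT, hmin'],
    by rw [← Finset.coe_max' hu, ← Finset.coe_max' hT, hmax']⟩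

lemma card_filter_three {R : Finset ℕ} {Δ : ℕ → Fin 3} {c₁ c₂ c₃ : Fin 3}
    (h12 : c₁ ≠ c₂) (h13 : c₁ ≠ c₃) (h23 : c₂ ≠ c₃)
    (cover : ∀ x : Fin 3, x = c₁ ∨ x = c₂ ∨ x = c₃) :
    (R.filter (fun x => Δ x = c₁)).card + (R.filter (fun x => Δ x = c₂)).card
      + (R.filter (fun x => Δ x = c₃)).card = R.card := by
  have h : R.card = ∑ b ∈ ({c₁, c₂, c₃} : Finset (Fin 3)), (R.filter fun x => Δ x = b).card :=
    Finset.card_eq_sum_card_fiberwise (fun x _ => by rcases cover (Δ x) with h | h | h <;> simp [h])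
  rw [h, Finset.sum_insert (by simp [h12, h13]), Finset.sum_insert (by simp [h23]),
    Finset.sum_singleton]
  ring

lemma fin3_others : ∀ w : Fin 3, ∃ c₁ c₂ : Fin 3, c₁ ≠ c₂ ∧ c₁ ≠ w ∧ c₂ ≠ w ∧
    ∀ x : Fin 3, x = w ∨ x = c₁ ∨ x = c₂ := by decide

lemma fin3_eq : ∀ (x y u w : Fin 3), u ≠ w → x ≠ u → x ≠ w → y ≠ u → y ≠ w → x = y := by decide

lemma pigeon2 {R : Finset ℕ} {Δ : ℕ → Fin 3} {w : Fin 3} {k : ℕ}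
    (hw : ∀ x ∈ R, Δ x ≠ w) (hcard : 2 * k ≤ R.card + 1) :
    ∃ c, c ≠ w ∧ k ≤ (R.filter (fun x => Δ x = c)).card := by
  obtain ⟨c₁, c₂, h12, h1w, h2w, cover⟩ := fin3_others w
  have hsum := card_filter_three (R := R) (Δ := Δ) (Ne.symm h1w) (Ne.symm h2w) h12 cover
  have hzero : (R.filter (fun x => Δ x = w)).card = 0 := by
    rw [Finset.card_eq_zero, Finset.filter_eq_empty_iff]
    exact hw
  by_contra hno
  push_neg at hno
  have hb1 := hno c₁ h1w
  have hb2 := hno c₂ h2w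
  omega

lemma k1core (s r : ℕ) (Δ : ℕ → Fin 3) (hs : 3 ≤ s) (hsr : s ≤ r) (h3r : 3 * r + 4 ≤ 5 * s)
    (c : Fin 3)
    (hz : 6 * s - 5 ≤ ((Finset.Icc 1 (6 * s - 5)).filter (fun x => Δ x = c)).card + 2 * (r - 1))
    (hbig : r ≤ ((Finset.Icc 1 (6 * s - 5)).filter (fun x => Δ x = c)).card)
    (hspan : ∀ x ∈ (Finset.Icc 1 (6 * s - 5)).filter (fun x => Δ x = c),
             ∀ y ∈ (Finset.Icc 1 (6 * s - 5)).filter (fun x => Δ x = c), x ≤ y + (3 * s - 4)) :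
    (∃ S₁ S₂ : Finset ℕ, S₁ ⊆ Finset.Icc 1 (6 * s - 5) ∧ S₂ ⊆ Finset.Icc 1 (6 * s - 5) ∧
      Mono Δ S₁ ∧ Mono Δ S₂ ∧ S₁.card = s ∧ S₂.card = r ∧
      (∀ a ∈ S₁, ∀ b ∈ S₂, a < b) ∧ diam S₁ ≤ diam S₂) := by
  set T := (Finset.Icc 1 (6 * s - 5)).filter (fun x => Δ x = c) with hT
  have hTmono : ∀ x ∈ T, Δ x = c := fun x hx => (Finset.mem_filter.mp hx).2
  have hTsub : T ⊆ Finset.Icc 1 (6 * s - 5) := Finset.filter_subset _ _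
  have hTne : T.Nonempty := by rw [← Finset.card_pos]; omega
  obtain ⟨S₁, hS₁T, hS₁card, hbot⟩ := exists_bottom s T (by omega)
  have hS₁ne : S₁.Nonempty := by rw [← Finset.card_pos]; omega
  have hT'card : (T \ S₁).card = T.card - s := by rw [Finset.card_sdiff_of_subset hS₁T, hS₁card]
  have hrT' : r ≤ (T \ S₁).card := by omega
  have hT'ne : (T \ S₁).Nonempty := by rw [← Finset.card_pos]; omega
  obtain ⟨S₂, hS₂T', hS₂card, hS₂min, hS₂max⟩ := exists_spanning (by omega) hrT'
  -- key numeric facts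
  have hminT : T.min' hTne ∈ S₁ := by
    by_contra hc
    obtain ⟨y, hy⟩ := hS₁ne
    exact absurd (T.min'_le y (hS₁T hy)) (not_le.mpr (hbot _ (T.min'_mem hTne) hc y hy))
  have e1 : S₁.min' hS₁ne = T.min' hTne :=
    le_antisymm (S₁.min'_le _ hminT) (Finset.min'_subset hS₁ne hS₁T)
  have e2 : T \ S₁ ⊆ Finset.Ioc (S₁.max' hS₁ne) (T.max' hTne) := by
    intro x hx
    obtain ⟨hxT, hxS⟩ := Finset.mem_sdiff.mp hx
    exact Finset.mem_Ioc.mpr ⟨hbot x hxT hxS _ (S₁.max'_mem hS₁ne), T.le_max' x hxT⟩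
  have f1 : T.card - s ≤ T.max' hTne - S₁.max' hS₁ne := by
    have := Finset.card_le_card e2
    rwa [Nat.card_Ioc, hT'card] at this
  have e3 : T \ S₁ ⊆ Finset.Icc ((T \ S₁).min' hT'ne) ((T \ S₁).max' hT'ne) :=
    fun x hx => Finset.mem_Icc.mpr ⟨Finset.min'_le _ x hx, Finset.le_max' _ x hx⟩
  have f2 : T.card - s ≤ (T \ S₁).max' hT'ne + 1 - (T \ S₁).min' hT'ne := by
    have := Finset.card_le_card e3
    rwa [Nat.card_Icc, hT'card] at this
  have f3 : T.max' hTne ≤ T.min' hTne + (3 * s - 4) :=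
    hspan _ (T.max'_mem hTne) _ (T.min'_mem hTne)
  have f4 : S₁.max' hS₁ne ≤ T.max' hTne := Finset.max'_subset hS₁ne hS₁T
  have f5 : S₁.min' hS₁ne ≤ S₁.max' hS₁ne := S₁.min'_le _ (S₁.max'_mem hS₁ne)
  have d1 : diam S₁ = S₁.max' hS₁ne - S₁.min' hS₁ne := diam_eq hS₁ne
  have d2 : diam S₂ = (T \ S₁).max' hT'ne - (T \ S₁).min' hT'ne := by
    have : diam S₂ = diam (T \ S₁) := by unfold diam; rw [hS₂min, hS₂max]
    rw [this, diam_eq hT'ne]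
  refine ⟨S₁, S₂, hS₁T.trans hTsub, (hS₂T'.trans Finset.sdiff_subset).trans hTsub,
    ?_, ?_, hS₁card, hS₂card, ?_, ?_⟩
  · intro a ha b hb
    rw [hTmono a (hS₁T ha), hTmono b (hS₁T hb)]
  · intro a ha b hb
    rw [hTmono a (Finset.sdiff_subset (hS₂T' ha)), hTmono b (Finset.sdiff_subset (hS₂T' hb))]
  · intro a ha b hb
    obtain ⟨hbT, hbS⟩ := Finset.mem_sdiff.mp (hS₂T' hb)
    exact hbot b hbT hbS a ha
  · rw [d1, d2, e1]
    omega

lemma k2core (s r : ℕ) (Δ : ℕ → Fin 3) (hs : 3 ≤ s) (hsr : s ≤ r) (h3r : 3 * r + 4 ≤ 5 * s)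
    (c₁ c₂ c₃ : Fin 3) (h12 : c₁ ≠ c₂) (h13 : c₁ ≠ c₃) (h23 : c₂ ≠ c₃)
    (cover : ∀ x : Fin 3, x = c₁ ∨ x = c₂ ∨ x = c₃)
    (hb1 : r ≤ ((Finset.Icc 1 (6 * s - 5)).filter (fun x => Δ x = c₁)).card)
    (hb2 : r ≤ ((Finset.Icc 1 (6 * s - 5)).filter (fun x => Δ x = c₂)).card)
    (hsm : ((Finset.Icc 1 (6 * s - 5)).filter (fun x => Δ x = c₃)).card < r)
    (hM : ∀ x ∈ (Finset.Icc 1 (6 * s - 5)).filter (fun x => Δ x = c₁),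
          ∃ y ∈ (Finset.Icc 1 (6 * s - 5)).filter (fun x => Δ x = c₂), x ≤ y)
    (hspan1 : ∀ x ∈ (Finset.Icc 1 (6 * s - 5)).filter (fun x => Δ x = c₁),
             ∀ y ∈ (Finset.Icc 1 (6 * s - 5)).filter (fun x => Δ x = c₁), x ≤ y + (3 * s - 4))
    (hspan2 : ∀ x ∈ (Finset.Icc 1 (6 * s - 5)).filter (fun x => Δ x = c₂),
             ∀ y ∈ (Finset.Icc 1 (6 * s - 5)).filter (fun x => Δ x = c₂), x ≤ y + (3 * s - 4)) :
    (∃ S₁ S₂ : Finset ℕ, S₁ ⊆ Finset.Icc 1 (6 * s - 5) ∧ S₂ ⊆ Finset.Icc 1 (6 * s - 5) ∧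
      Mono Δ S₁ ∧ Mono Δ S₂ ∧ S₁.card = s ∧ S₂.card = r ∧
      (∀ a ∈ S₁, ∀ b ∈ S₂, a < b) ∧ diam S₁ ≤ diam S₂) := by
  set K₁ := (Finset.Icc 1 (6 * s - 5)).filter (fun x => Δ x = c₁) with hK₁
  set K₂ := (Finset.Icc 1 (6 * s - 5)).filter (fun x => Δ x = c₂) with hK₂
  set K₃ := (Finset.Icc 1 (6 * s - 5)).filter (fun x => Δ x = c₃) with hK₃
  have hK₂ne : K₂.Nonempty := by rw [← Finset.card_pos]; omega
  set m₂ := K₂.min' hK₂ne with hm₂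
  set M₂ := K₂.max' hK₂ne with hM₂
  have hm₂mem : m₂ ∈ K₂ := K₂.min'_mem hK₂ne
  have hm₂Icc := Finset.mem_Icc.mp (Finset.mem_filter.mp hm₂mem).1
  have hM₂mem : M₂ ∈ K₂ := K₂.max'_mem hK₂ne
  have hM₂Icc := Finset.mem_Icc.mp (Finset.mem_filter.mp hM₂mem).1
  have hmM₂ : m₂ ≤ M₂ := K₂.min'_le _ hM₂mem
  have c3span : M₂ ≤ m₂ + (3 * s - 4) := hspan2 _ hM₂mem _ hm₂mem
  -- the region below m₂ and its c₁ part
  set R := Finset.Icc 1 (m₂ - 1) with hR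
  set L := R.filter (fun x => Δ x = c₁) with hL
  have hRsub : ∀ x ∈ R, x ∈ Finset.Icc 1 (6 * s - 5) ∧ x < m₂ := by
    intro x hx
    have := Finset.mem_Icc.mp hx
    exact ⟨Finset.mem_Icc.mpr ⟨this.1, by omega⟩, by omega⟩
  have hLK₁ : L ⊆ K₁ := by
    intro x hx
    obtain ⟨hxR, hxc⟩ := Finset.mem_filter.mp hx
    exact Finset.mem_filter.mpr ⟨(hRsub x hxR).1, hxc⟩
  -- no c₂ in R
  have hno2 : (R.filter (fun x => Δ x = c₂)).card = 0 := by
    rw [Finset.card_eq_zero, Finset.filter_eq_empty_iff]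
    intro x hx hcx
    have h := hRsub x hx
    have : m₂ ≤ x := K₂.min'_le x (Finset.mem_filter.mpr ⟨h.1, hcx⟩)
    omega
  have hRcard : R.card = m₂ - 1 := by rw [hR, Nat.card_Icc]; omega
  have hc1 : L.card + (R.filter (fun x => Δ x = c₃)).card = m₂ - 1 := by
    have h' := card_filter_three (R := R) (Δ := Δ) h12 h13 h23 cover
    rw [← hL] at h'
    omega
  -- everything above M₂ is c₃
  have habove : Finset.Ioc M₂ (6 * s - 5) ⊆ K₃ := by
    intro x hx
    have hxI := Finset.mem_Ioc.mp hx
    have hxIcc : x ∈ Finset.Icc 1 (6 * s - 5) := Finset.mem_Icc.mpr ⟨by omega, hxI.2⟩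
    rcases cover (Δ x) with h | h | h
    · exfalso
      obtain ⟨y, hy, hxy⟩ := hM x (Finset.mem_filter.mpr ⟨hxIcc, h⟩)
      have := K₂.le_max' y hy
      omega
    · exfalso
      have := K₂.le_max' x (Finset.mem_filter.mpr ⟨hxIcc, h⟩)
      omega
    · exact Finset.mem_filter.mpr ⟨hxIcc, h⟩
  have hc2 : (R.filter (fun x => Δ x = c₃)).card + (6 * s - 5 - M₂) ≤ K₃.card := by
    have hdisj : Disjoint (R.filter (fun x => Δ x = c₃)) (Finset.Ioc M₂ (6 * s - 5)) := by
      rw [Finset.disjoint_left]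
      intro a ha ha'
      have h1 := (hRsub a (Finset.filter_subset _ _ ha)).2
      have h2 := (Finset.mem_Ioc.mp ha').1
      omega
    have hsub : (R.filter (fun x => Δ x = c₃)) ∪ Finset.Ioc M₂ (6 * s - 5) ⊆ K₃ := by
      intro x hx
      rcases Finset.mem_union.mp hx with h | h
      · obtain ⟨hxR, hxc⟩ := Finset.mem_filter.mp h
        exact Finset.mem_filter.mpr ⟨(hRsub x hxR).1, hxc⟩
      · exact habove h
    have := Finset.card_le_card hsub
    rw [Finset.card_union_of_disjoint hdisj, Nat.card_Ioc] at this
    exact this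
  have hLcard : s ≤ L.card := by omega
  -- bottom s of L
  obtain ⟨S₁, hS₁L, hS₁card, hbot⟩ := exists_bottom s L hLcard
  have hS₁ne : S₁.Nonempty := by rw [← Finset.card_pos]; omega
  have hLne : L.Nonempty := by rw [← Finset.card_pos]; omega
  have hminL : L.min' hLne ∈ S₁ := by
    by_contra hc
    obtain ⟨y, hy⟩ := hS₁ne
    exact absurd (L.min'_le y (hS₁L hy)) (not_le.mpr (hbot _ (L.min'_mem hLne) hc y hy))
  have e1 : S₁.min' hS₁ne = L.min' hLne :=
    le_antisymm (S₁.min'_le _ hminL) (Finset.min'_subset hS₁ne hS₁L)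
  have e2 : L \ S₁ ⊆ Finset.Ioc (S₁.max' hS₁ne) (L.max' hLne) := by
    intro x hx
    obtain ⟨hxL, hxS⟩ := Finset.mem_sdiff.mp hx
    exact Finset.mem_Ioc.mpr ⟨hbot x hxL hxS _ (S₁.max'_mem hS₁ne), L.le_max' x hxL⟩
  have g2 : L.card - s ≤ L.max' hLne - S₁.max' hS₁ne := by
    have h' := Finset.card_le_card e2
    rwa [Nat.card_Ioc, Finset.card_sdiff_of_subset hS₁L, hS₁card] at h'
  have g3 : L.max' hLne ≤ L.min' hLne + (3 * s - 4) :=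
    hspan1 _ (hLK₁ (L.max'_mem hLne)) _ (hLK₁ (L.min'_mem hLne))
  have g4 : S₁.max' hS₁ne ≤ L.max' hLne := Finset.max'_subset hS₁ne hS₁L
  have g5 : S₁.min' hS₁ne ≤ S₁.max' hS₁ne := S₁.min'_le _ (S₁.max'_mem hS₁ne)
  -- S₂ spanning K₂
  obtain ⟨S₂, hS₂K, hS₂card, hS₂min, hS₂max⟩ := exists_spanning (T := K₂) (by omega) hb2
  have d1 : diam S₁ = S₁.max' hS₁ne - S₁.min' hS₁ne := diam_eq hS₁ne
  have d2 : diam S₂ = M₂ - m₂ := by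
    have : diam S₂ = diam K₂ := by unfold diam; rw [hS₂min, hS₂max]
    rw [this, diam_eq hK₂ne]
  refine ⟨S₁, S₂, ?_, hS₂K.trans (Finset.filter_subset _ _), ?_, ?_, hS₁card, hS₂card, ?_, ?_⟩
  · exact fun x hx => (hLK₁.trans (Finset.filter_subset _ _)) (hS₁L hx)
  · intro a ha b hb
    rw [(Finset.mem_filter.mp (hS₁L ha)).2, (Finset.mem_filter.mp (hS₁L hb)).2]
  · intro a ha b hb
    rw [(Finset.mem_filter.mp (hS₂K ha)).2, (Finset.mem_filter.mp (hS₂K hb)).2]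
  · intro a ha b hb
    have h1 := (hRsub a (Finset.filter_subset _ _ (hS₁L ha))).2
    have h2 : m₂ ≤ b := K₂.min'_le b (hS₂K hb)
    omega
  · rw [d1, d2, e1]
    omega

lemma k3core (s r : ℕ) (Δ : ℕ → Fin 3) (hs : 3 ≤ s) (hsr : s ≤ r) (h3r : 3 * r + 4 ≤ 5 * s)
    (hbigW : r ≤ ((Finset.Icc 1 (6 * s - 5)).filter (fun x => Δ x = Δ (6 * s - 5))).card)
    (hbigU : r ≤ ((Finset.Icc 1 (6 * s - 5)).filter (fun x => Δ x = Δ 1)).card)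
    (hspan : ∀ c : Fin 3, r ≤ ((Finset.Icc 1 (6 * s - 5)).filter (fun x => Δ x = c)).card →
      ∀ x ∈ (Finset.Icc 1 (6 * s - 5)).filter (fun x => Δ x = c),
      ∀ y ∈ (Finset.Icc 1 (6 * s - 5)).filter (fun x => Δ x = c), x ≤ y + (3 * s - 4)) :
    (∃ S₁ S₂ : Finset ℕ, S₁ ⊆ Finset.Icc 1 (6 * s - 5) ∧ S₂ ⊆ Finset.Icc 1 (6 * s - 5) ∧
      Mono Δ S₁ ∧ Mono Δ S₂ ∧ S₁.card = s ∧ S₂.card = r ∧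
      (∀ a ∈ S₁, ∀ b ∈ S₂, a < b) ∧ diam S₁ ≤ diam S₂) := by
  set n := 6 * s - 5 with hn
  set Kw := (Finset.Icc 1 n).filter (fun x => Δ x = Δ n) with hKw
  have hnmem : n ∈ Kw := Finset.mem_filter.mpr ⟨Finset.mem_Icc.mpr ⟨by omega, le_refl n⟩, rfl⟩
  have hKwne : Kw.Nonempty := ⟨n, hnmem⟩
  set mw := Kw.min' hKwne with hmw
  have hmwmem : mw ∈ Kw := Kw.min'_mem hKwne
  have hmwIcc := Finset.mem_Icc.mp (Finset.mem_filter.mp hmwmem).1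
  have spanW : n ≤ mw + (3 * s - 4) := hspan _ hbigW _ hnmem _ hmwmem
  have h1mem : (1 : ℕ) ∈ (Finset.Icc 1 n).filter (fun x => Δ x = Δ 1) :=
    Finset.mem_filter.mpr ⟨Finset.mem_Icc.mpr ⟨le_refl 1, by omega⟩, rfl⟩
  have hU : ∀ x ∈ (Finset.Icc 1 n).filter (fun x => Δ x = Δ 1), x ≤ 3 * s - 3 := by
    intro x hx
    have := hspan _ hbigU x hx 1 h1mem
    omega
  have hUW : Δ 1 ≠ Δ n := by
    intro h
    have hnm : n ∈ Finset.Icc 1 n := Finset.mem_Icc.mpr ⟨by omega, le_refl n⟩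
    have : n ≤ 3 * s - 3 := hU n (Finset.mem_filter.mpr ⟨hnm, h.symm⟩)
    omega
  -- span of Kw: card bound
  have hKwIcc : Kw ⊆ Finset.Icc mw n := by
    intro x hx
    exact Finset.mem_Icc.mpr ⟨Kw.min'_le x hx, (Finset.mem_Icc.mp (Finset.mem_filter.mp hx).1).2⟩
  have hKwcard : Kw.card ≤ n + 1 - mw := by
    have := Finset.card_le_card hKwIcc
    rwa [Nat.card_Icc] at this
  obtain ⟨S₂, hS₂K, hS₂card, hS₂min, hS₂max⟩ := exists_spanning (T := Kw) (by omega) hbigW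
  have hmaxKw : Kw.max' hKwne = n :=
    le_antisymm ((Finset.mem_Icc.mp (Finset.mem_filter.mp (Kw.max'_mem hKwne)).1).2) (Kw.le_max' n hnmem)
  have d2 : diam S₂ = n - mw := by
    have h' : diam S₂ = diam Kw := by unfold diam; rw [hS₂min, hS₂max]
    rw [h', diam_eq hKwne, hmaxKw]
  have hS₂lb : ∀ b ∈ S₂, mw ≤ b := fun b hb => Kw.min'_le b (hS₂K hb)
  have hmono₂ : Mono Δ S₂ := by
    intro a ha b hb
    rw [(Finset.mem_filter.mp (hS₂K ha)).2, (Finset.mem_filter.mp (hS₂K hb)).2]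
  have hS₂sub : S₂ ⊆ Finset.Icc 1 n := hS₂K.trans (Finset.filter_subset _ _)
  by_cases hD : mw ≤ 4 * s - 3
  · -- wide top class: pigeonhole in [1, 2s-1]
    set R := Finset.Icc 1 (2 * s - 1) with hR
    have hwR : ∀ x ∈ R, Δ x ≠ Δ n := by
      intro x hx h
      have hxI := Finset.mem_Icc.mp hx
      have hxmem : x ∈ Finset.Icc 1 n := Finset.mem_Icc.mpr ⟨hxI.1, by omega⟩
      have : mw ≤ x := Kw.min'_le x (Finset.mem_filter.mpr ⟨hxmem, h⟩)
      omega
    obtain ⟨c, hcw, hsc⟩ := pigeon2 (k := s) hwR (by rw [hR, Nat.card_Icc]; omega)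
    obtain ⟨S₁, hS₁f, hS₁card⟩ := Finset.exists_subset_card_eq hsc
    have hS₁R : S₁ ⊆ R := hS₁f.trans (Finset.filter_subset _ _)
    have hS₁ne : S₁.Nonempty := by rw [← Finset.card_pos]; omega
    have hS₁bd : ∀ a ∈ S₁, 1 ≤ a ∧ a ≤ 2 * s - 1 := fun a ha => Finset.mem_Icc.mp (hS₁R ha)
    refine ⟨S₁, S₂, ?_, hS₂sub, ?_, hmono₂, hS₁card, hS₂card, ?_, ?_⟩
    · intro a ha
      have := hS₁bd a ha
      exact Finset.mem_Icc.mpr ⟨this.1, by omega⟩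
    · intro a ha b hb
      rw [(Finset.mem_filter.mp (hS₁f ha)).2, (Finset.mem_filter.mp (hS₁f hb)).2]
    · intro a ha b hb
      have h1 := (hS₁bd a ha).2
      have h2 := hS₂lb b hb
      omega
    · rw [d2, diam_eq hS₁ne]
      have h1 := (hS₁bd _ (S₁.max'_mem hS₁ne)).2
      have h2 := (hS₁bd _ (S₁.min'_mem hS₁ne)).1
      omega
  · -- narrow top class: s consecutive integers of the third color
    set S₁ := Finset.Icc (3 * s - 2) (4 * s - 3) with hS₁
    have hS₁card : S₁.card = s := by rw [hS₁, Nat.card_Icc]; omega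
    have hS₁ne : S₁.Nonempty := by rw [← Finset.card_pos]; omega
    have hS₁bd : ∀ a ∈ S₁, 3 * s - 2 ≤ a ∧ a ≤ 4 * s - 3 := fun a ha => Finset.mem_Icc.mp ha
    have hcolors : ∀ a ∈ S₁, Δ a ≠ Δ 1 ∧ Δ a ≠ Δ n := by
      intro a ha
      have hb := hS₁bd a ha
      have hamem : a ∈ Finset.Icc 1 n := Finset.mem_Icc.mpr ⟨by omega, by omega⟩
      constructor
      · intro h
        have : a ≤ 3 * s - 3 := hU a (Finset.mem_filter.mpr ⟨hamem, h⟩)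
        omega
      · intro h
        have : mw ≤ a := Kw.min'_le a (Finset.mem_filter.mpr ⟨hamem, h⟩)
        omega
    refine ⟨S₁, S₂, ?_, hS₂sub, ?_, hmono₂, hS₁card, hS₂card, ?_, ?_⟩
    · intro a ha
      have := hS₁bd a ha
      exact Finset.mem_Icc.mpr ⟨by omega, by omega⟩
    · intro a ha b hb
      obtain ⟨ha1, ha2⟩ := hcolors a ha
      obtain ⟨hb1, hb2⟩ := hcolors b hb
      exact fin3_eq _ _ _ _ hUW ha1 ha2 hb1 hb2
    · intro a ha b hb
      have h1 := (hS₁bd a ha).2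
      have h2 := hS₂lb b hb
      omega
    · rw [d2, diam_eq hS₁ne]
      have h1 := (hS₁bd _ (S₁.max'_mem hS₁ne)).2
      have h2 := (hS₁bd _ (S₁.min'_mem hS₁ne)).1
      omega


set_option maxHeartbeats 1000000 in
theorem stmt12 (s r : ℕ) (hs : 3 ≤ s) (hsr : s ≤ r) (hr : r ≤ (5 * s - 1) / 3 - 1)
    (Δ : ℕ → Fin 3) :
    (∃ S : Finset ℕ, S ⊆ Finset.Icc 1 (6 * s - 5) ∧ Mono Δ S ∧ S.card = r ∧ 3 * s - 3 ≤ diam S) ∨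
    (∃ S₁ S₂ : Finset ℕ, S₁ ⊆ Finset.Icc 1 (6 * s - 5) ∧ S₂ ⊆ Finset.Icc 1 (6 * s - 5) ∧
      Mono Δ S₁ ∧ Mono Δ S₂ ∧ S₁.card = s ∧ S₂.card = r ∧
      (∀ a ∈ S₁, ∀ b ∈ S₂, a < b) ∧ diam S₁ ≤ diam S₂) := by
  have h3r : 3 * r + 4 ≤ 5 * s := by omega
  by_cases hi : (∃ S : Finset ℕ, S ⊆ Finset.Icc 1 (6 * s - 5) ∧ Mono Δ S ∧ S.card = r ∧
      3 * s - 3 ≤ diam S)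
  · exact Or.inl hi
  right
  push_neg at hi
  -- span bound for big color classes
  have hspan : ∀ c : Fin 3, r ≤ ((Finset.Icc 1 (6 * s - 5)).filter (fun x => Δ x = c)).card →
      ∀ x ∈ (Finset.Icc 1 (6 * s - 5)).filter (fun x => Δ x = c),
      ∀ y ∈ (Finset.Icc 1 (6 * s - 5)).filter (fun x => Δ x = c), x ≤ y + (3 * s - 4) := by
    intro c hc x hx y hy
    by_contra hcon
    push_neg at hcon
    obtain ⟨S, hS1, hS2, hS3, hS4⟩ :=
      exists_spanning (T := (Finset.Icc 1 (6 * s - 5)).filter (fun x => Δ x = c)) (by omega) hc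
    have hne : ((Finset.Icc 1 (6 * s - 5)).filter (fun x => Δ x = c)).Nonempty := ⟨x, hx⟩
    have hmono : Mono Δ S := by
      intro a ha b hb
      rw [(Finset.mem_filter.mp (hS1 ha)).2, (Finset.mem_filter.mp (hS1 hb)).2]
    have hd : diam S = ((Finset.Icc 1 (6 * s - 5)).filter (fun x => Δ x = c)).max' hne -
        ((Finset.Icc 1 (6 * s - 5)).filter (fun x => Δ x = c)).min' hne := by
      have h' : diam S = diam ((Finset.Icc 1 (6 * s - 5)).filter (fun x => Δ x = c)) := by
        unfold diam; rw [hS3, hS4]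
      rw [h', diam_eq hne]
    have hxle := Finset.le_max' _ x hx
    have hyge := Finset.min'_le _ y hy
    have hlt := hi S (hS1.trans (Finset.filter_subset _ _)) hmono hS2
    omega
  -- there is a big color
  have hcardI : (Finset.Icc 1 (6 * s - 5)).card = 6 * s - 5 := by rw [Nat.card_Icc]; omega
  have hex : ∃ c : Fin 3, r ≤ ((Finset.Icc 1 (6 * s - 5)).filter (fun x => Δ x = c)).card := by
    by_contra hno
    push_neg at hno
    have h0 := hno 0
    have h1 := hno 1
    have h2 := hno 2
    have hsum := card_filter_three (R := Finset.Icc 1 (6 * s - 5)) (Δ := Δ) (c₁ := 0) (c₂ := 1)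
      (c₃ := 2) (by decide) (by decide) (by decide) (by decide)
    omega
  obtain ⟨cA, hA⟩ := hex
  obtain ⟨cB, cC, hBC, hBA, hCA, cover⟩ := fin3_others cA
  by_cases hB : r ≤ ((Finset.Icc 1 (6 * s - 5)).filter (fun x => Δ x = cB)).card
  · by_cases hC : r ≤ ((Finset.Icc 1 (6 * s - 5)).filter (fun x => Δ x = cC)).card
    · -- all three colors big
      have hbigW : r ≤ ((Finset.Icc 1 (6 * s - 5)).filter
          (fun x => Δ x = Δ (6 * s - 5))).card := by
        rcases cover (Δ (6 * s - 5)) with h | h | h <;> rw [h] <;> assumption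
      have hbigU : r ≤ ((Finset.Icc 1 (6 * s - 5)).filter (fun x => Δ x = Δ 1)).card := by
        rcases cover (Δ 1) with h | h | h <;> rw [h] <;> assumption
      exact k3core s r Δ hs hsr h3r hbigW hbigU hspan
    · -- big: cA, cB; small: cC
      have hC' : ((Finset.Icc 1 (6 * s - 5)).filter (fun x => Δ x = cC)).card < r := by omega
      have hAne : ((Finset.Icc 1 (6 * s - 5)).filter (fun x => Δ x = cA)).Nonempty := by
        rw [← Finset.card_pos]; omega
      have hBne : ((Finset.Icc 1 (6 * s - 5)).filter (fun x => Δ x = cB)).Nonempty := by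
        rw [← Finset.card_pos]; omega
      by_cases hMM : ((Finset.Icc 1 (6 * s - 5)).filter (fun x => Δ x = cA)).max' hAne ≤
          ((Finset.Icc 1 (6 * s - 5)).filter (fun x => Δ x = cB)).max' hBne
      · refine k2core s r Δ hs hsr h3r cA cB cC (Ne.symm hBA) (Ne.symm hCA) hBC
          (fun x => by rcases cover x with h | h | h <;> tauto) hA hB hC' ?_
          (hspan cA hA) (hspan cB hB)
        intro x hx
        exact ⟨_, Finset.max'_mem _ hBne, (Finset.le_max' _ x hx).trans hMM⟩
      · refine k2core s r Δ hs hsr h3r cB cA cC hBA hBC (Ne.symm hCA)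
          (fun x => by rcases cover x with h | h | h <;> tauto) hB hA hC' ?_
          (hspan cB hB) (hspan cA hA)
        intro x hx
        exact ⟨_, Finset.max'_mem _ hAne, (Finset.le_max' _ x hx).trans (le_of_not_ge hMM)⟩
  · by_cases hC : r ≤ ((Finset.Icc 1 (6 * s - 5)).filter (fun x => Δ x = cC)).card
    · -- big: cA, cC; small: cB
      have hB' : ((Finset.Icc 1 (6 * s - 5)).filter (fun x => Δ x = cB)).card < r := by omega
      have hAne : ((Finset.Icc 1 (6 * s - 5)).filter (fun x => Δ x = cA)).Nonempty := by
        rw [← Finset.card_pos]; omega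
      have hCne : ((Finset.Icc 1 (6 * s - 5)).filter (fun x => Δ x = cC)).Nonempty := by
        rw [← Finset.card_pos]; omega
      by_cases hMM : ((Finset.Icc 1 (6 * s - 5)).filter (fun x => Δ x = cA)).max' hAne ≤
          ((Finset.Icc 1 (6 * s - 5)).filter (fun x => Δ x = cC)).max' hCne
      · refine k2core s r Δ hs hsr h3r cA cC cB (Ne.symm hCA) (Ne.symm hBA) (Ne.symm hBC)
          (fun x => by rcases cover x with h | h | h <;> tauto) hA hC hB' ?_
          (hspan cA hA) (hspan cC hC)
        intro x hx
        exact ⟨_, Finset.max'_mem _ hCne, (Finset.le_max' _ x hx).trans hMM⟩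
      · refine k2core s r Δ hs hsr h3r cC cA cB hCA (Ne.symm hBC) (Ne.symm hBA)
          (fun x => by rcases cover x with h | h | h <;> tauto) hC hA hB' ?_
          (hspan cC hC) (hspan cA hA)
        intro x hx
        exact ⟨_, Finset.max'_mem _ hAne, (Finset.le_max' _ x hx).trans (le_of_not_ge hMM)⟩
    · -- only cA big
      have hz : 6 * s - 5 ≤ ((Finset.Icc 1 (6 * s - 5)).filter (fun x => Δ x = cA)).card
          + 2 * (r - 1) := by
        have hsum := card_filter_three (R := Finset.Icc 1 (6 * s - 5)) (Δ := Δ)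
          (Ne.symm hBA) (Ne.symm hCA) hBC
          (fun x => by rcases cover x with h | h | h <;> tauto)
        omega
      exact k1core s r Δ hs hsr h3r cA hz hA (hspan cA hA)
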